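/- Let R be a finite commutative ring that is not a field. Then the nil clean divisor graph G_N(R) is connected with diameter at most 3: for any two vertices x, y there is a path of length at most 3 between them. -/

import Mathlib

def IsNilCleanElem {R : Type*} [CommRing R] (x : R) : Prop :=
  ∃ e n : R, IsIdempotentElem e ∧ IsNilpotent n ∧ x = e + n

def NCVertex {R : Type*} [CommRing R] (x : R) : Prop :=
  x ≠ 0 ∧ ∃ y : R, y ≠ 0 ∧ y ≠ x ∧ IsNilCleanElem (x * y)

def NCAdj {R : Type*} [CommRing R] (x y : R) : Prop :=
  x ≠ y ∧ NCVertex x ∧ NCVertex y ∧ IsNilCleanElem (x * y)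

section Aux

variable {R : Type*} [CommRing R]

lemma nilclean_of_idem {e : R} (he : IsIdempotentElem e) : IsNilCleanElem e :=
  ⟨e, 0, he, IsNilpotent.zero, (add_zero e).symm⟩

lemma nilclean_of_nilp {n : R} (hn : IsNilpotent n) : IsNilCleanElem n :=
  ⟨0, n, IsIdempotentElem.zero, hn, (zero_add n).symm⟩

lemma nilclean_zero : IsNilCleanElem (0 : R) := nilclean_of_idem IsIdempotentElem.zero

lemma NCAdj.symm {x y : R} (h : NCAdj x y) : NCAdj y x :=
  ⟨h.1.symm, h.2.2.1, h.2.1, by rw [mul_comm]; exact h.2.2.2⟩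

lemma vertex_of_side {e a : R} (he : IsIdempotentElem e)
    (he1 : e ≠ 1) (ha0 : a ≠ 0) (ha : e * a = a) : NCVertex a := by
  have h0 : e * (1 - e) = 0 := by rw [mul_sub, mul_one, he, sub_self]
  refine ⟨ha0, 1 - e, sub_ne_zero.mpr (Ne.symm he1), ?_, ?_⟩
  · intro h
    apply ha0
    rw [h] at h0
    rw [← ha, h0]
  · have : a * (1 - e) = 0 := by
      rw [mul_sub, mul_one, mul_comm a e, ha, sub_self]
    rw [this]; exact nilclean_zero

lemma cross_adj {e a b : R} (he : IsIdempotentElem e)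
    (ha0 : a ≠ 0) (ha : e * a = a) (hb0 : b ≠ 0) (hb : e * b = 0) : NCAdj a b := by
  have he1 : e ≠ 1 := fun h => hb0 (by rw [← hb, h, one_mul])
  have hf : IsIdempotentElem (1 - e) := he.one_sub
  have hbf : (1 - e) * b = b := by rw [sub_mul, one_mul, hb, sub_zero]
  have hf1 : (1 : R) - e ≠ 1 := by
    intro h
    have : e = 0 := by linear_combination -h
    apply ha0; rw [← ha, this, zero_mul]
  refine ⟨?_, vertex_of_side he he1 ha0 ha, vertex_of_side hf hf1 hb0 hbf, ?_⟩
  · intro h; apply ha0; rw [← ha, h, hb]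
  · have : a * b = 0 := by
      calc a * b = (e * a) * b := by rw [ha]
        _ = (e * b) * a := by ring
        _ = 0 := by rw [hb, zero_mul]
    rw [this]; exact nilclean_zero

lemma attach {e : R} [Fintype R] (he : IsIdempotentElem e)
    {x : R} (hx : e * x ≠ 0) :
    ∃ z : R, z ≠ 0 ∧ e * z = z ∧ IsNilCleanElem (x * z) := by
  classical
  let S := {r : R // e * r = r}
  let g : S → S := fun z => ⟨e * x * z.1, by
    have : e * (e * x * z.1) = (e * e) * (x * z.1) := by ring
    rw [this, he]; ring⟩
  by_cases hinj : Function.Injective g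
  · have hsurj : Function.Surjective g := Finite.surjective_of_injective hinj
    obtain ⟨z, hz⟩ := hsurj ⟨e, he⟩
    have hz1 : e * x * z.1 = e := congrArg Subtype.val hz
    have hz0 : z.1 ≠ 0 := by
      intro h
      apply hx
      rw [h, mul_zero] at hz1
      rw [← hz1, zero_mul]
    refine ⟨z.1, hz0, z.2, ?_⟩
    have : x * z.1 = e := by
      rw [← z.2]
      calc x * (e * z.1) = e * x * z.1 := by ring
        _ = e := hz1
    rw [this]; exact nilclean_of_idem he
  · rw [Function.not_injective_iff] at hinj
    obtain ⟨a, b, hab, hne⟩ := hinj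
    have hab' : e * x * a.1 = e * x * b.1 := congrArg Subtype.val hab
    refine ⟨a.1 - b.1, ?_, ?_, ?_⟩
    · intro h
      exact hne (Subtype.ext (sub_eq_zero.mp h))
    · rw [mul_sub, a.2, b.2]
    · have : x * (a.1 - b.1) = 0 := by
        have ha : x * a.1 = e * x * a.1 :=
          (calc e * x * a.1 = x * (e * a.1) := by ring
            _ = x * a.1 := by rw [a.2]).symm
        have hb : x * b.1 = e * x * b.1 :=
          (calc e * x * b.1 = x * (e * b.1) := by ring
            _ = x * b.1 := by rw [b.2]).symm
        rw [mul_sub, ha, hb, hab', sub_self]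
      rw [this]; exact nilclean_zero

lemma exists_idem_pow [Fintype R] (a : R) :
    ∃ m : ℕ, 1 ≤ m ∧ IsIdempotentElem (a ^ m) := by
  obtain ⟨i, j, hne, heq⟩ := Finite.exists_ne_map_eq_of_infinite (fun n : ℕ => a ^ (n + 1))
  wlog hij : i < j generalizing i j
  · exact this j i hne.symm heq.symm (by omega)
  set p := i + 1 with hp
  set d := j - i with hd
  have hd1 : 1 ≤ d := by omega
  have hpd : a ^ p = a ^ (p + d) := by
    have : j + 1 = p + d := by omega
    rw [heq, this]
  have step : ∀ n, p ≤ n → a ^ (n + d) = a ^ n := by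
    intro n hn
    have : a ^ (n + d) = a ^ (n - p) * a ^ (p + d) := by
      rw [← pow_add]; congr 1; omega
    rw [this, ← hpd, ← pow_add]
    congr 1; omega
  have iter : ∀ k n, p ≤ n → a ^ (n + k * d) = a ^ n := by
    intro k
    induction k with
    | zero => intro n _; simp
    | succ k ih =>
      intro n hn
      have : n + (k + 1) * d = (n + k * d) + d := by ring
      rw [this, step _ (by omega), ih n hn]
  refine ⟨(p + 1) * d, by nlinarith, ?_⟩
  show a ^ ((p + 1) * d) * a ^ ((p + 1) * d) = a ^ ((p + 1) * d)
  rw [← pow_add]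
  exact iter (p + 1) ((p + 1) * d) (by nlinarith)

lemma unit_not_nilp [Nontrivial R] {x : R} (hu : IsUnit x) (hn : IsNilpotent x) : False := by
  obtain ⟨k, hk⟩ := hn
  have : IsUnit (x ^ k) := hu.pow k
  rw [hk] at this
  exact zero_ne_one (isUnit_zero_iff.mp this)

lemma nilp_mul {x : R} (hn : IsNilpotent x) (y : R) : IsNilpotent (x * y) := by
  obtain ⟨k, hk⟩ := hn
  exact ⟨k, by rw [mul_pow, hk, zero_mul]⟩

end Aux

section Main

variable {R : Type*} [CommRing R] [Fintype R] [Nontrivial R]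

-- the goal disjunction
local notation "Goal" x y =>
  (NCAdj x y ∨ (∃ a, NCAdj x a ∧ NCAdj a y) ∨
    (∃ a b, NCAdj x a ∧ NCAdj a b ∧ NCAdj b y))

lemma goal_symm {x y : R}
    (h : NCAdj x y ∨ (∃ a : R, NCAdj x a ∧ NCAdj a y) ∨
      (∃ a b : R, NCAdj x a ∧ NCAdj a b ∧ NCAdj b y)) :
    NCAdj y x ∨ (∃ a : R, NCAdj y a ∧ NCAdj a x) ∨
      (∃ a b : R, NCAdj y a ∧ NCAdj a b ∧ NCAdj b x) := by
  rcases h with h | ⟨a, h1, h2⟩ | ⟨a, b, h1, h2, h3⟩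
  · exact Or.inl h.symm
  · exact Or.inr (Or.inl ⟨a, h2.symm, h1.symm⟩)
  · exact Or.inr (Or.inr ⟨b, a, h3.symm, h2.symm, h1.symm⟩)

lemma left_case {e : R} (he : IsIdempotentElem e) (he0 : e ≠ 0) (he1 : e ≠ 1)
    {x y : R} (hx : NCVertex x) (hy : NCVertex y) (hxy : x ≠ y)
    (hxL : (1 - e) * x = 0) :
    NCAdj x y ∨ (∃ a : R, NCAdj x a ∧ NCAdj a y) ∨
      (∃ a b : R, NCAdj x a ∧ NCAdj a b ∧ NCAdj b y) := by
  have hex : e * x = x := by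
    have : x - e * x = 0 := by rw [← hxL]; ring
    linear_combination -this
  have hf : IsIdempotentElem (1 - e) := he.one_sub
  have hf0 : (1 : R) - e ≠ 0 := sub_ne_zero.mpr (Ne.symm he1)
  have hef : e * (1 - e) = 0 := by rw [mul_sub, mul_one, he, sub_self]
  by_cases hyL : (1 - e) * y = 0
  · -- both on the e-side: path x — (1-e) — y
    have adj1 : NCAdj (1 - e) x := cross_adj hf hf0 (by rw [hf]) hx.1 (by
      rw [mul_comm] at hxL; rw [mul_comm, hxL])
    have adj2 : NCAdj (1 - e) y := cross_adj hf hf0 (by rw [hf]) hy.1 (by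
      rw [mul_comm] at hyL; rw [mul_comm, hyL])
    exact Or.inr (Or.inl ⟨1 - e, adj1.symm, adj2⟩)
  · by_cases hyR : e * y = 0
    · -- y on the other side: adjacent
      exact Or.inl (cross_adj he hx.1 hex hy.1 hyR)
    · -- y mixed: attach on (1-e)-side
      obtain ⟨z, hz0, hz, hzc⟩ := attach hf hyL
      have hez : e * z = 0 := by
        rw [← hz]
        calc e * ((1 - e) * z) = (e * (1 - e)) * z := by ring
          _ = 0 := by rw [hef, zero_mul]
      have adj1 : NCAdj x z := cross_adj he hx.1 hex hz0 hez
      have adj2 : NCAdj z y := by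
        refine ⟨?_, vertex_of_side hf (fun h => he0 (by linear_combination -h)) hz0 hz,
          hy, ?_⟩
        · intro h; apply hyR; rw [← h, hez]
        · rw [mul_comm]; exact hzc
      exact Or.inr (Or.inl ⟨z, adj1, adj2⟩)

lemma mixed_case {e : R} (he : IsIdempotentElem e) (he0 : e ≠ 0) (he1 : e ≠ 1)
    {x y : R} (hx : NCVertex x) (hy : NCVertex y)
    (hxe : e * x ≠ 0) (hxf : (1 - e) * x ≠ 0)
    (hye : e * y ≠ 0) (hyf : (1 - e) * y ≠ 0) :
    NCAdj x y ∨ (∃ a : R, NCAdj x a ∧ NCAdj a y) ∨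
      (∃ a b : R, NCAdj x a ∧ NCAdj a b ∧ NCAdj b y) := by
  have hf : IsIdempotentElem (1 - e) := he.one_sub
  have hef : e * (1 - e) = 0 := by rw [mul_sub, mul_one, he, sub_self]
  obtain ⟨a, ha0, ha, hac⟩ := attach he hxe
  obtain ⟨b, hb0, hb, hbc⟩ := attach hf hyf
  have heb : e * b = 0 := by
    rw [← hb]
    calc e * ((1 - e) * b) = (e * (1 - e)) * b := by ring
      _ = 0 := by rw [hef, zero_mul]
  have hfa : (1 - e) * a = 0 := by
    rw [← ha]
    calc (1 - e) * (e * a) = (e * (1 - e)) * a := by ring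
      _ = 0 := by rw [hef, zero_mul]
  have adj1 : NCAdj x a := by
    refine ⟨?_, hx, vertex_of_side he he1 ha0 ha, hac⟩
    · intro h; apply hxf; rw [h, hfa]
  have adj2 : NCAdj a b := cross_adj he ha0 ha hb0 heb
  have adj3 : NCAdj b y := by
    refine ⟨?_, vertex_of_side hf (fun h => he0 (by linear_combination -h)) hb0 hb, hy, ?_⟩
    · intro h; apply hye; rw [← h, heb]
    · rw [mul_comm]; exact hbc
  exact Or.inr (Or.inr ⟨a, b, adj1, adj2, adj3⟩)

end Main

theorem stmt7 {R : Type*} [CommRing R] [Fintype R] [Nontrivial R]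
    (hF : ¬ IsField R) :
    ∀ x y : R, NCVertex x → NCVertex y → x ≠ y →
      (NCAdj x y ∨ (∃ a : R, NCAdj x a ∧ NCAdj a y) ∨
        (∃ a b : R, NCAdj x a ∧ NCAdj a b ∧ NCAdj b y)) := by
  intro x y hx hy hxy
  by_cases hloc : ∀ a : R, IsNilpotent a ∨ IsUnit a
  · -- "local" case: every element nilpotent or unit
    -- get a nonzero nilpotent
    have : ∃ n : R, n ≠ 0 ∧ IsNilpotent n := by
      by_contra h
      push_neg at h
      apply hF
      refine ⟨exists_pair_ne R, mul_comm, ?_⟩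
      intro a ha
      rcases hloc a with hn | hu
      · exact absurd hn (by simpa using h a ha)
      · exact hu.exists_right_inv
    obtain ⟨n, hn0, hnn⟩ := this
    by_cases hnc : IsNilCleanElem (x * y)
    · exact Or.inl ⟨hxy, hx, hy, hnc⟩
    · -- x and y must both be units; go through n
      have hxu : IsUnit x := by
        rcases hloc x with h | h
        · exact absurd (nilclean_of_nilp (nilp_mul h y)) hnc
        · exact h
      have hyu : IsUnit y := by
        rcases hloc y with h | h
        · exact absurd (nilclean_of_nilp (by rw [mul_comm]; exact nilp_mul h x)) hnc
        · exact h
      have hvn : NCVertex n := by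
        refine ⟨hn0, 1, one_ne_zero, ?_, ?_⟩
        · intro h; exact unit_not_nilp (h ▸ isUnit_one) hnn
        · rw [mul_one]; exact nilclean_of_nilp hnn
      have adj1 : NCAdj x n := by
        refine ⟨fun h => unit_not_nilp hxu (h ▸ hnn), hx, hvn, ?_⟩
        exact nilclean_of_nilp (by rw [mul_comm]; exact nilp_mul hnn x)
      have adj2 : NCAdj n y := by
        refine ⟨fun h => unit_not_nilp hyu (h ▸ hnn), hvn, hy, ?_⟩
        exact nilclean_of_nilp (nilp_mul hnn y)
      exact Or.inr (Or.inl ⟨n, adj1, adj2⟩)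
  · -- there is a nontrivial idempotent
    push_neg at hloc
    obtain ⟨c, hcn, hcu⟩ := hloc
    obtain ⟨m, hm1, hm⟩ := exists_idem_pow c
    set e := c ^ m with hedef
    have he0 : e ≠ 0 := fun h => hcn ⟨m, h⟩
    have he1 : e ≠ 1 := by
      intro h
      apply hcu
      refine IsUnit.of_mul_eq_one (a := c) (c ^ (m - 1)) ?_
      rw [← pow_succ']
      have : m - 1 + 1 = m := by omega
      rw [this, ← hedef, h]
    have hf : IsIdempotentElem (1 - e) := hm.one_sub
    have hf0 : (1 : R) - e ≠ 0 := sub_ne_zero.mpr (Ne.symm he1)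
    have hf1 : (1 : R) - e ≠ 1 := fun h => he0 (by linear_combination -h)
    have hcompl : (1 : R) - (1 - e) = e := by ring
    -- case analysis on sides of x
    by_cases hxL : (1 - e) * x = 0
    · exact left_case hm he0 he1 hx hy hxy hxL
    · by_cases hxR : e * x = 0
      · have := left_case hf hf0 hf1 hx hy hxy (by rw [hcompl]; exact hxR)
        exact this
      · -- x mixed
        by_cases hyL : (1 - e) * y = 0
        · exact goal_symm (left_case hm he0 he1 hy hx hxy.symm hyL)
        · by_cases hyR : e * y = 0
          · exact goal_symm (left_case hf hf0 hf1 hy hx hxy.symm (by rw [hcompl]; exact hyR))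
          · exact mixed_case hm he0 he1 hx hy hxR hxL hyR hyL
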